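/- If a ground program G is recurrent with respect to some level mapping |·| : Atom → ℝ and some ε > 0, then there is no infinite sequence A₀, A₁, A₂, … of atoms such that for each k there exists (Aₖ, Bs) ∈ G with A_{k+1} ∈ Bs. (Recurrence implies termination of ground derivations.) -/
import Mathlib

theorem stmt_1 {Atom : Type*} (G : Set (Atom × List Atom)) (lvl : Atom → ℝ)
    (ε : ℝ) (hε : ε > 0)
    (hrec : ∀ p ∈ G, lvl p.1 ≥ 0 ∧ ∀ B ∈ p.2, lvl B ≥ 0 ∧ lvl p.1 ≥ lvl B + ε) :
    ¬ ∃ A : ℕ → Atom, ∀ k, ∃ Bs, (A k, Bs) ∈ G ∧ A (k+1) ∈ Bs := by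
  rintro ⟨A, hA⟩
  have step : ∀ k, lvl (A (k+1)) + ε ≤ lvl (A k) := by
    intro k
    obtain ⟨Bs, hG, hmem⟩ := hA k
    exact ((hrec _ hG).2 _ hmem).2
  have bound : ∀ k, lvl (A k) + k * ε ≤ lvl (A 0) := by
    intro k
    induction k with
    | zero => simp
    | succ n ih =>
      have := step n
      push_cast
      nlinarith
  have nn : ∀ k, (0:ℝ) ≤ lvl (A k) := by
    intro k
    obtain ⟨Bs, hG, _⟩ := hA k
    exact (hrec _ hG).1
  obtain ⟨n, hn⟩ := exists_nat_gt (lvl (A 0) / ε)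
  have h1 := bound n
  have h2 := nn n
  have : lvl (A 0) / ε < n := hn
  have : lvl (A 0) < n * ε := by
    rw [div_lt_iff₀ hε] at hn; linarith
  linarith
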